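/- The product of two 4-element chains (the poset {0,1,2,3}² with componentwise order, ranked by the sum of coordinates) is a Macaulay poset, and there exists a total order on it witnessing the Macaulay property with respect to which the poset is additive. -/
import Mathlib


/-- `q` covers `p` with respect to the order relation `le`:
`p < q` and there is no element strictly between them. -/
def CoversR {α : Type*} (le : α → α → Prop) (p q : α) : Prop :=
  le p q ∧ p ≠ q ∧ ∀ r, le p r → le r q → r = p ∨ r = q

/-- The upper shadow of `A`: all elements covering some element of `A`. -/
def UpperShadowR {α : Type*} (le : α → α → Prop) (A : Set α) : Set α :=
  {q | ∃ a ∈ A, CoversR le a q}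

/-- `r` is a rank function for the order relation `le`: minimal elements have
rank `0` and ranks increase by one along covers. -/
def IsRankFunctionR {α : Type*} (le : α → α → Prop) (r : α → ℕ) : Prop :=
  (∀ p, (∀ q, le q p → q = p) → r p = 0) ∧
    ∀ p q, CoversR le p q → r q = r p + 1

/-- `S` is an initial segment (a set of largest elements) of the level `L`
with respect to the total order `t`. -/
def IsInitialSegIn {α : Type*} (t : α → α → Prop) (L S : Set α) : Prop :=
  S ⊆ L ∧ ∀ a ∈ S, ∀ b ∈ L, t a b → b ∈ S

/-- The poset given by `le`, ranked by `r`, satisfies the Macaulay conditions with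
respect to the total order `t`: for every rank `d` and every `A ⊆ P_d`, the initial
segment `S` of `P_d` of size `|A|` has `|∇S| ≤ |∇A|`, and `∇S` is again an initial
segment (of `P_{d+1}`). -/
def MacaulayWith {α : Type*} (le : α → α → Prop) (r : α → ℕ) (t : α → α → Prop) : Prop :=
  ∀ d : ℕ, ∀ A : Set α, A ⊆ {p | r p = d} →
    ∀ S : Set α, IsInitialSegIn t {p | r p = d} S → S.ncard = A.ncard →
      (UpperShadowR le S).ncard ≤ (UpperShadowR le A).ncard ∧
        IsInitialSegIn t {p | r p = d + 1} (UpperShadowR le S)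

/-- The poset given by `le` with rank function `r` (with finite rank levels) is
a Macaulay poset: some total order witnesses the Macaulay conditions. -/
def IsMacaulayPosetR {α : Type*} (le : α → α → Prop) (r : α → ℕ) : Prop :=
  IsRankFunctionR le r ∧ (∀ d : ℕ, {p | r p = d}.Finite) ∧
    ∃ t : α → α → Prop, IsLinearOrder α t ∧ MacaulayWith le r t

/-- The poset given by `le` is a Macaulay poset. -/
def IsMacaulayPoset {α : Type*} (le : α → α → Prop) : Prop :=
  ∃ r : α → ℕ, IsMacaulayPosetR le r

/-- `A` is a segment of the level `L` with respect to the total order `t`: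
whenever `a, b ∈ A` and `c ∈ L` lies between them in the total order, `c ∈ A`. -/
def IsSegmentIn {α : Type*} (t : α → α → Prop) (L A : Set α) : Prop :=
  A ⊆ L ∧ ∀ a ∈ A, ∀ b ∈ A, ∀ c ∈ L, t b c → t c a → c ∈ A

/-- `C` is a final segment (a set of smallest elements) of the level `L`
with respect to the total order `t`. -/
def IsFinalSegIn {α : Type*} (t : α → α → Prop) (L C : Set α) : Prop :=
  C ⊆ L ∧ ∀ a ∈ C, ∀ b ∈ L, t b a → b ∈ C

/-- The new shadow of a segment `A` of the level `L`: the upper shadow of `A` minus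
the upper shadow of the set `B` of all elements of `L` strictly larger (in the total
order `t`) than every element of `A`. -/
def NewShadow {α : Type*} (le : α → α → Prop) (t : α → α → Prop) (L A : Set α) : Set α :=
  UpperShadowR le A \ UpperShadowR le {b | b ∈ L ∧ ∀ a ∈ A, t a b ∧ b ≠ a}

/-- The ranked poset `(le, r)` with total order `t` is additive:
(1) initial segments have new shadows at least as large as those of arbitrary segments
of the same rank and size, and (2) arbitrary segments have new shadows at least as
large as those of final segments of the same rank and size. -/
def IsAdditiveWith {α : Type*} (le : α → α → Prop) (r : α → ℕ) (t : α → α → Prop) : Prop :=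
  ∀ d : ℕ,
    (∀ A B : Set α, IsInitialSegIn t {p | r p = d} A → IsSegmentIn t {p | r p = d} B →
      A.ncard = B.ncard →
        (NewShadow le t {p | r p = d} B).ncard ≤ (NewShadow le t {p | r p = d} A).ncard) ∧
    (∀ B C : Set α, IsSegmentIn t {p | r p = d} B → IsFinalSegIn t {p | r p = d} C →
      B.ncard = C.ncard →
        (NewShadow le t {p | r p = d} C).ncard ≤ (NewShadow le t {p | r p = d} B).ncard)

/- ### Auxiliary definitions -/

abbrev P4 := Fin 4 × Fin 4
def rk (p : P4) : ℕ := (p.1 : ℕ) + (p.2 : ℕ)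
def key (p : P4) : ℕ := rk p * 4 + (p.1 : ℕ)
def tord (p q : P4) : Prop := key p ≤ key q
instance : DecidableRel tord := fun p q => Nat.decLe _ _
def levelF (d : ℕ) : Finset P4 := Finset.univ.filter (fun p => rk p = d)
def covB (p q : P4) : Prop :=
  ((q.1 : ℕ) = (p.1 : ℕ) + 1 ∧ q.2 = p.2) ∨ (q.1 = p.1 ∧ (q.2 : ℕ) = (p.2 : ℕ) + 1)
instance : ∀ p q, Decidable (covB p q) := fun _ _ => by unfold covB; infer_instance
instance : ∀ p q : P4, Decidable (CoversR (· ≤ ·) p q) := fun _ _ => by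
  unfold CoversR; infer_instance
def shF (F : Finset P4) : Finset P4 := Finset.univ.filter (fun q => ∃ a ∈ F, covB a q)
def bigB (d : ℕ) (F : Finset P4) : Finset P4 :=
  (levelF d).filter (fun b => ∀ a ∈ F, tord a b ∧ b ≠ a)
def newShF (d : ℕ) (F : Finset P4) : Finset P4 := shF F \ shF (bigB d F)
def initF (d : ℕ) (G : Finset P4) : Prop :=
  G ⊆ levelF d ∧ ∀ a ∈ G, ∀ b ∈ levelF d, tord a b → b ∈ G
def segF (d : ℕ) (G : Finset P4) : Prop :=
  G ⊆ levelF d ∧ ∀ a ∈ G, ∀ b ∈ G, ∀ c ∈ levelF d, tord b c → tord c a → c ∈ G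
def finF (d : ℕ) (G : Finset P4) : Prop :=
  G ⊆ levelF d ∧ ∀ a ∈ G, ∀ b ∈ levelF d, tord b a → b ∈ G
instance : ∀ d G, Decidable (initF d G) := fun _ _ => by unfold initF; infer_instance
set_option synthInstance.maxSize 2000 in
instance : ∀ d G, Decidable (segF d G) := fun _ _ => by unfold segF; infer_instance
instance : ∀ d G, Decidable (finF d G) := fun _ _ => by unfold finF; infer_instance

def innerMac (d : ℕ) (F G : Finset P4) : Prop :=
  initF d G → G.card = F.card →
    (shF G).card ≤ (shF F).card ∧ initF (d + 1) (shF G)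
set_option synthInstance.maxSize 2000 in
instance : ∀ d F G, Decidable (innerMac d F G) := fun _ _ _ => by
  unfold innerMac; infer_instance

def innerAdd1 (d : ℕ) (A B : Finset P4) : Prop :=
  initF d A → segF d B → A.card = B.card → (newShF d B).card ≤ (newShF d A).card
def innerAdd2 (d : ℕ) (B C : Finset P4) : Prop :=
  segF d B → finF d C → B.card = C.card → (newShF d C).card ≤ (newShF d B).card
set_option synthInstance.maxSize 2000 in
instance : ∀ d A B, Decidable (innerAdd1 d A B) := fun _ _ _ => by
  unfold innerAdd1; infer_instance
set_option synthInstance.maxSize 2000 in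
instance : ∀ d B C, Decidable (innerAdd2 d B C) := fun _ _ _ => by
  unfold innerAdd2; infer_instance

def subAt (d n : ℕ) : Finset P4 := (levelF d).filter (fun p => n.testBit (p.1 : ℕ))

lemma mem_levelF {d : ℕ} {p : P4} : p ∈ levelF d ↔ rk p = d := by
  simp [levelF]

lemma level_inj {d : ℕ} {p q : P4} (hp : p ∈ levelF d) (hq : q ∈ levelF d)
    (h : p.1 = q.1) : p = q := by
  rw [mem_levelF] at hp hq
  unfold rk at hp hq
  have h2 : (p.2 : ℕ) = (q.2 : ℕ) := by
    have := congrArg (Fin.val) h; omega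
  exact Prod.ext h (Fin.ext h2)

lemma testBit_small : ∀ b0 b1 b2 b3 : ℕ, b0 ≤ 1 → b1 ≤ 1 → b2 ≤ 1 → b3 ≤ 1 →
    ∀ j : Fin 4, Nat.testBit (b0 + 2 * b1 + 4 * b2 + 8 * b3) (j : ℕ)
      = decide (([b0, b1, b2, b3].get (Fin.cast (by simp) j)) = 1) := by
  intro b0 b1 b2 b3 h0 h1 h2 h3 j
  interval_cases b0 <;> interval_cases b1 <;> interval_cases b2 <;>
    interval_cases b3 <;> fin_cases j <;> decide

lemma listget_aux (j : Fin 4) (b : Fin 4 → ℕ) :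
    ([b 0, b 1, b 2, b 3].get (Fin.cast (by simp) j)) = b j := by
  fin_cases j <;> rfl

lemma subAt_surj (d : ℕ) (F : Finset P4) (hF : F ⊆ levelF d) :
    ∃ n < 16, F = subAt d n := by
  classical
  set b : Fin 4 → ℕ := fun i => if ∃ p ∈ F, p.1 = i then 1 else 0 with hb
  have hble : ∀ i, b i ≤ 1 := by
    intro i; simp only [hb]; split <;> omega
  refine ⟨b 0 + 2 * b 1 + 4 * b 2 + 8 * b 3, ?_, ?_⟩
  · have := hble 0; have := hble 1; have := hble 2; have := hble 3; omega
  · ext p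
    have htb := testBit_small (b 0) (b 1) (b 2) (b 3) (hble 0) (hble 1) (hble 2)
      (hble 3) p.1
    have hgl : ([b 0, b 1, b 2, b 3].get (Fin.cast (by simp) p.1)) = b p.1 :=
      listget_aux p.1 b
    constructor
    · intro hp
      rw [subAt, Finset.mem_filter]
      refine ⟨hF hp, ?_⟩
      rw [htb, hgl, decide_eq_true_eq]
      simp only [hb]
      rw [if_pos ⟨p, hp, rfl⟩]
    · intro hp
      rw [subAt, Finset.mem_filter] at hp
      obtain ⟨hpl, hbit⟩ := hp
      rw [htb, hgl, decide_eq_true_eq] at hbit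
      simp only [hb] at hbit
      by_cases hex : ∃ q ∈ F, q.1 = p.1
      · obtain ⟨q, hq, hq1⟩ := hex
        have := level_inj (hF hq) hpl hq1
        rwa [← this]
      · rw [if_neg hex] at hbit; omega

def macChk : Bool := (List.range 7).all fun d =>
  (List.range 16).all fun n =>
    (List.range 16).all fun m => decide (innerMac d (subAt d n) (subAt d m))

def addChk : Bool := (List.range 7).all fun d =>
  (List.range 16).all fun n =>
    (List.range 16).all fun m =>
      decide (innerAdd1 d (subAt d n) (subAt d m)) &&
        decide (innerAdd2 d (subAt d n) (subAt d m))

theorem macChk_true : macChk = true := by decide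
theorem addChk_true : addChk = true := by decide

theorem macFin : ∀ d, d < 7 → ∀ F, F ⊆ levelF d → ∀ G, G ⊆ levelF d →
    innerMac d F G := by
  have h := macChk_true
  unfold macChk at h
  simp only [List.all_eq_true, List.mem_range, decide_eq_true_eq] at h
  intro d hd F hF G hG
  obtain ⟨n, hn, rfl⟩ := subAt_surj d F hF
  obtain ⟨m, hm, rfl⟩ := subAt_surj d G hG
  exact h d hd n hn m hm

theorem addFin : ∀ d, d < 7 → ∀ A, A ⊆ levelF d → ∀ B, B ⊆ levelF d →
    innerAdd1 d A B ∧ innerAdd2 d A B := by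
  have h := addChk_true
  unfold addChk at h
  simp only [List.all_eq_true, List.mem_range, Bool.and_eq_true, decide_eq_true_eq] at h
  intro d hd A hA B hB
  obtain ⟨n, hn, rfl⟩ := subAt_surj d A hA
  obtain ⟨m, hm, rfl⟩ := subAt_surj d B hB
  exact h d hd n hn m hm

lemma covIff : ∀ p q : P4, CoversR (· ≤ ·) p q ↔ covB p q := by decide

lemma level_coe (d : ℕ) : {p : P4 | rk p = d} = (levelF d : Set P4) := by
  ext p; simp [levelF]

lemma shadow_coe (F : Finset P4) :
    UpperShadowR (· ≤ ·) (F : Set P4) = (shF F : Set P4) := by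
  ext q
  simp only [UpperShadowR, Set.mem_setOf_eq, shF, Finset.coe_filter, Finset.mem_coe,
    Finset.mem_filter, Finset.mem_univ, true_and, covIff]

lemma bigB_coe (d : ℕ) (F : Finset P4) :
    {b : P4 | b ∈ (levelF d : Set P4) ∧ ∀ a ∈ (F : Set P4), tord a b ∧ b ≠ a}
      = (bigB d F : Set P4) := by
  ext b; simp [bigB]

lemma newShadow_coe (d : ℕ) (F : Finset P4) :
    NewShadow (· ≤ ·) tord {p : P4 | rk p = d} (F : Set P4) = (newShF d F : Set P4) := by
  unfold NewShadow newShF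
  rw [level_coe, bigB_coe, shadow_coe, shadow_coe, Finset.coe_sdiff]

lemma init_coe (d : ℕ) (G : Finset P4) :
    IsInitialSegIn tord (levelF d : Set P4) (G : Set P4) ↔ initF d G := by
  unfold IsInitialSegIn initF
  simp [Finset.coe_subset, Finset.mem_coe]

lemma seg_coe (d : ℕ) (G : Finset P4) :
    IsSegmentIn tord (levelF d : Set P4) (G : Set P4) ↔ segF d G := by
  unfold IsSegmentIn segF
  simp [Finset.coe_subset, Finset.mem_coe]

lemma fin_coe (d : ℕ) (G : Finset P4) :
    IsFinalSegIn tord (levelF d : Set P4) (G : Set P4) ↔ finF d G := by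
  unfold IsFinalSegIn finF
  simp [Finset.coe_subset, Finset.mem_coe]

lemma keyInj : ∀ p q : P4, key p = key q → p = q := by decide

lemma linT : IsLinearOrder P4 tord :=
  { refl := fun a => Nat.le_refl _
    trans := fun _ _ _ h1 h2 => Nat.le_trans h1 h2
    antisymm := fun a b h1 h2 => keyInj a b (Nat.le_antisymm h1 h2)
    total := fun a b => Nat.le_total _ _ }

lemma level_empty {d : ℕ} (hd : ¬ d < 7) : {p : P4 | rk p = d} = ∅ := by
  ext p
  simp only [Set.mem_setOf_eq, Set.mem_empty_iff_false, iff_false]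
  have h1 := p.1.isLt; have h2 := p.2.isLt
  unfold rk; omega

lemma shadow_empty : UpperShadowR (· ≤ · : P4 → P4 → Prop) ∅ = ∅ := by
  ext q; simp [UpperShadowR]

lemma macSet : MacaulayWith (· ≤ ·) rk tord := by
  intro d A hA S hS hcard
  by_cases hd : d < 7
  · have hL : {p : P4 | rk p = d} = (levelF d : Set P4) := level_coe d
    obtain ⟨F, hFA⟩ : ∃ F : Finset P4, (F : Set P4) = A :=
      ⟨(Set.toFinite A).toFinset, Set.Finite.coe_toFinset _⟩
    obtain ⟨G, hGS⟩ : ∃ G : Finset P4, (G : Set P4) = S :=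
      ⟨(Set.toFinite S).toFinset, Set.Finite.coe_toFinset _⟩
    have hF : F ⊆ levelF d := by
      rw [← Finset.coe_subset]; rw [hFA]; rw [← hL]; exact hA
    have hG : G ⊆ levelF d := by
      rw [← Finset.coe_subset]; rw [hGS]; rw [← hL]; exact hS.1
    have hInit : initF d G := by
      rw [← init_coe]; rw [hGS]; rw [← hL]; exact hS
    have hcards : G.card = F.card := by
      rw [← Set.ncard_coe_finset, ← Set.ncard_coe_finset, hFA, hGS]; exact hcard
    obtain ⟨h1, h2⟩ := macFin d hd F hF G hG hInit hcards
    constructor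
    · rw [← hGS, ← hFA, shadow_coe, shadow_coe, Set.ncard_coe_finset,
        Set.ncard_coe_finset]
      exact h1
    · rw [← hGS, shadow_coe, level_coe]
      exact (init_coe _ _).2 h2
  · have hLe := level_empty hd
    have hS0 : S = ∅ := Set.subset_empty_iff.1 (hLe ▸ hS.1)
    have hsh : UpperShadowR (· ≤ · : P4 → P4 → Prop) S = ∅ := by
      rw [hS0]; exact shadow_empty
    refine ⟨by rw [hsh]; simp, ?_, ?_⟩
    · rw [hsh]; exact Set.empty_subset _
    · intro a ha; rw [hsh] at ha; exact absurd ha (Set.notMem_empty a)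

lemma newShadow_empty (d : ℕ) :
    NewShadow (· ≤ · : P4 → P4 → Prop) tord {p : P4 | rk p = d} ∅ = ∅ := by
  unfold NewShadow
  rw [shadow_empty]
  exact Set.empty_diff _

lemma addSet : IsAdditiveWith (· ≤ ·) rk tord := by
  intro d
  by_cases hd : d < 7
  · have hL : {p : P4 | rk p = d} = (levelF d : Set P4) := level_coe d
    constructor
    · intro A B hA hB hcard
      obtain ⟨F, hFA⟩ : ∃ F : Finset P4, (F : Set P4) = A :=
        ⟨(Set.toFinite A).toFinset, Set.Finite.coe_toFinset _⟩
      obtain ⟨G, hGB⟩ : ∃ G : Finset P4, (G : Set P4) = B :=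
        ⟨(Set.toFinite B).toFinset, Set.Finite.coe_toFinset _⟩
      have hF : F ⊆ levelF d := by
        rw [← Finset.coe_subset]; rw [hFA]; rw [← hL]; exact hA.1
      have hG : G ⊆ levelF d := by
        rw [← Finset.coe_subset]; rw [hGB]; rw [← hL]; exact hB.1
      have hInit : initF d F := by rw [← init_coe]; rw [hFA]; rw [← hL]; exact hA
      have hSeg : segF d G := by rw [← seg_coe]; rw [hGB]; rw [← hL]; exact hB
      have hcards : F.card = G.card := by
        rw [← Set.ncard_coe_finset, ← Set.ncard_coe_finset, hFA, hGB]; exact hcard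
      have := (addFin d hd F hF G hG).1 hInit hSeg hcards
      rw [← hFA, ← hGB, newShadow_coe, newShadow_coe, Set.ncard_coe_finset,
        Set.ncard_coe_finset]
      exact this
    · intro B C hB hC hcard
      obtain ⟨F, hFB⟩ : ∃ F : Finset P4, (F : Set P4) = B :=
        ⟨(Set.toFinite B).toFinset, Set.Finite.coe_toFinset _⟩
      obtain ⟨G, hGC⟩ : ∃ G : Finset P4, (G : Set P4) = C :=
        ⟨(Set.toFinite C).toFinset, Set.Finite.coe_toFinset _⟩
      have hF : F ⊆ levelF d := by
        rw [← Finset.coe_subset]; rw [hFB]; rw [← hL]; exact hB.1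
      have hG : G ⊆ levelF d := by
        rw [← Finset.coe_subset]; rw [hGC]; rw [← hL]; exact hC.1
      have hSeg : segF d F := by rw [← seg_coe]; rw [hFB]; rw [← hL]; exact hB
      have hFin : finF d G := by rw [← fin_coe]; rw [hGC]; rw [← hL]; exact hC
      have hcards : F.card = G.card := by
        rw [← Set.ncard_coe_finset, ← Set.ncard_coe_finset, hFB, hGC]; exact hcard
      have := (addFin d hd F hF G hG).2 hSeg hFin hcards
      rw [← hFB, ← hGC, newShadow_coe, newShadow_coe, Set.ncard_coe_finset,
        Set.ncard_coe_finset]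
      exact this
  · have hLe := level_empty hd
    constructor
    · intro A B hA hB _
      have hA0 : A = ∅ := Set.subset_empty_iff.1 (hLe ▸ hA.1)
      have hB0 : B = ∅ := Set.subset_empty_iff.1 (hLe ▸ hB.1)
      rw [hA0, hB0]
    · intro B C hB hC _
      have hB0 : B = ∅ := Set.subset_empty_iff.1 (hLe ▸ hB.1)
      have hC0 : C = ∅ := Set.subset_empty_iff.1 (hLe ▸ hC.1)
      rw [hB0, hC0]

set_option maxRecDepth 2000 in
lemma rankFn : IsRankFunctionR (· ≤ · : P4 → P4 → Prop) rk :=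
  ⟨by decide, by decide⟩

/-- The product of two 4-element chains (the poset `{0,1,2,3}²` with componentwise
order, ranked by the sum of coordinates) is a Macaulay poset, and some total order
witnessing the Macaulay property also makes it additive. -/
theorem chain4_product_macaulay_additive :
    IsRankFunctionR (· ≤ · : Fin 4 × Fin 4 → Fin 4 × Fin 4 → Prop)
      (fun p => (p.1 : ℕ) + (p.2 : ℕ)) ∧
    (∀ d : ℕ, {p : Fin 4 × Fin 4 | (p.1 : ℕ) + (p.2 : ℕ) = d}.Finite) ∧
    ∃ t : Fin 4 × Fin 4 → Fin 4 × Fin 4 → Prop, IsLinearOrder (Fin 4 × Fin 4) t ∧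
      MacaulayWith (· ≤ ·) (fun p => (p.1 : ℕ) + (p.2 : ℕ)) t ∧
      IsAdditiveWith (· ≤ ·) (fun p => (p.1 : ℕ) + (p.2 : ℕ)) t :=
  ⟨rankFn, fun _ => Set.toFinite _, tord, linT, macSet, addSet⟩
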